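/- Let Q be an odd prime not dividing a^2 - 1, let D = a^2 - 1, ε the Legendre symbol (D/Q), and δ the Legendre symbol (2(a+1)/Q). Then in Z[√D]/(Q) one has ω_a^{(Q - ε)/2} ≡ δ, where ω_a = a + √D. -/

import Mathlib

theorem chua_aux (Q : ℕ) [Fact Q.Prime] (k : ℕ) (hk : Q = 2 * k + 1)
    (a ε δ : ℤ) (hδsq : δ * δ = 1)
    (R : Type*) [CommRing R] [CharP R Q] (s : R)
    (hs2 : s * s = ((a ^ 2 - 1 : ℤ) : R))
    (hDk : ((a ^ 2 - 1 : ℤ) : R) ^ k = ((ε : ℤ) : R))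
    (hck : ((2 * (a + 1) : ℤ) : R) ^ k = ((δ : ℤ) : R))
    (hcu : IsUnit ((2 * (a + 1) : ℤ) : R))
    (m : ℕ) (hm : (ε = 1 ∧ m = k) ∨ (ε = -1 ∧ m = k + 1)) :
    (((a : ℤ) : R) + s) ^ m = ((δ : ℤ) : R) := by
  set A : R := ((a : ℤ) : R) with hA
  set c : R := ((2 * (a + 1) : ℤ) : R) with hc
  have hcR : c = 2 * (A + 1) := by rw [hc, hA]; push_cast; ring
  have hs2' : s * s = A ^ 2 - 1 := by rw [hs2, hA]; push_cast; ring
  set α : R := (A + 1) + s with hα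
  set β : R := (A + 1) - s with hβ
  have hαβ : α * β = c := by rw [hα, hβ, hcR]; linear_combination -hs2'
  have hαsq : α ^ 2 = c * (A + s) := by rw [hα, hcR]; linear_combination hs2'
  have hαu : IsUnit α := isUnit_of_mul_isUnit_left (hαβ ▸ hcu)
  let f : ZMod Q →+* R := ZMod.castHom dvd_rfl R
  have hfermat : ((a + 1 : ℤ) : R) ^ Q = ((a + 1 : ℤ) : R) := by
    rw [← map_intCast f (a + 1), ← map_pow, ZMod.pow_card]
  have hA1 : ((a + 1 : ℤ) : R) = A + 1 := by rw [hA]; push_cast; ring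
  have hsQ : s ^ Q = ((ε : ℤ) : R) * s := by
    rw [hk, pow_succ, pow_mul, pow_two, hs2, hDk]
  have hαQ : α ^ Q = (A + 1) + ((ε : ℤ) : R) * s := by
    rw [hα, ← hA1, add_pow_char, hfermat, hsQ, hA1]
  have hkey : c ^ k * (A + s) ^ m = 1 := by
    rcases hm with ⟨hε1, hmk'⟩ | ⟨hε1, hmk'⟩
    · have h1 : α * α ^ (2 * k) = α * 1 := by
        rw [mul_one, ← pow_succ']
        have hQk : 2 * k + 1 = Q := by omega
        rw [hQk, hαQ, hε1, Int.cast_one, one_mul, hα]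
      have h2 : α ^ (2 * k) = 1 := hαu.mul_left_cancel h1
      rw [hmk']
      calc c ^ k * (A + s) ^ k = (c * (A + s)) ^ k := (mul_pow _ _ k).symm
        _ = (α ^ 2) ^ k := by rw [hαsq]
        _ = α ^ (2 * k) := by rw [← pow_mul]
        _ = 1 := h2
    · have h1 : α ^ (Q + 1) = c := by
        rw [pow_succ, hαQ, hε1, Int.cast_neg, Int.cast_one, neg_one_mul, ← sub_eq_add_neg,
          ← hβ, show β * α = α * β from mul_comm β α, hαβ]
      have h2 : α ^ (Q + 1) = c * (c ^ k * (A + s) ^ (k + 1)) := by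
        have hQ1 : Q + 1 = 2 * (k + 1) := by omega
        rw [hQ1, pow_mul, hαsq, mul_pow]
        ring
      have h3 : c * (c ^ k * (A + s) ^ (k + 1)) = c * 1 := by
        rw [mul_one, ← h2, h1]
      rw [hmk']
      exact hcu.mul_left_cancel h3
  have hδR : ((δ : ℤ) : R) * ((δ : ℤ) : R) = 1 := by
    rw [← Int.cast_mul, hδsq, Int.cast_one]
  calc (A + s) ^ m = (((δ : ℤ) : R) * ((δ : ℤ) : R)) * (A + s) ^ m := by rw [hδR, one_mul]
    _ = ((δ : ℤ) : R) * (c ^ k * (A + s) ^ m) := by rw [← hck]; ring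
    _ = ((δ : ℤ) : R) := by rw [hkey, mul_one]

theorem chua_congruence (a : ℤ) (Q : ℕ) [Fact Q.Prime] (hodd : Odd Q)
    (hcop : IsCoprime (a ^ 2 - 1) (Q : ℤ)) :
    ((Q : Zsqrtd (a ^ 2 - 1))) ∣
      ((⟨a, 1⟩ : Zsqrtd (a ^ 2 - 1)) ^ (((Q : ℤ) - legendreSym Q (a ^ 2 - 1)).toNat / 2)
        - ((legendreSym Q (2 * (a + 1)) : ℤ) : Zsqrtd (a ^ 2 - 1))) := by
  have hQp : Q.Prime := Fact.out
  obtain ⟨k, hk⟩ := hodd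
  have hQZp : Prime (Q : ℤ) := Nat.prime_iff_prime_int.mp hQp
  -- Q does not divide a^2 - 1
  have hQD : ¬ ((Q : ℤ) ∣ (a ^ 2 - 1)) := by
    intro h
    exact hQZp.not_unit (hcop.isUnit_of_dvd' h dvd_rfl)
  have hDne : (((a ^ 2 - 1 : ℤ) : ZMod Q)) ≠ 0 := by
    rw [Ne, ZMod.intCast_zmod_eq_zero_iff_dvd]
    exact hQD
  -- Q does not divide 2*(a+1)
  have hQc : ¬ ((Q : ℤ) ∣ 2 * (a + 1)) := by
    intro h
    rcases hQZp.dvd_mul.mp h with h2 | ha1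
    · have h2' : Q ∣ 2 := by exact_mod_cast h2
      have h2'' := Nat.le_of_dvd (by norm_num) h2'
      have h2''' := hQp.two_le
      omega
    · apply hQD
      have hfac : a ^ 2 - 1 = (a + 1) * (a - 1) := by ring
      rw [hfac]
      exact Dvd.dvd.mul_right ha1 _
  have hcne : (((2 * (a + 1) : ℤ) : ZMod Q)) ≠ 0 := by
    rw [Ne, ZMod.intCast_zmod_eq_zero_iff_dvd]
    exact hQc
  set ε : ℤ := legendreSym Q (a ^ 2 - 1) with hε
  set δ : ℤ := legendreSym Q (2 * (a + 1)) with hδ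
  have hεpm : ε = 1 ∨ ε = -1 := legendreSym.eq_one_or_neg_one Q hDne
  have hδpm : δ = 1 ∨ δ = -1 := legendreSym.eq_one_or_neg_one Q hcne
  have hδsq : δ * δ = 1 := by rcases hδpm with h | h <;> rw [h] <;> norm_num
  have hQ2 : Q / 2 = k := by omega
  -- the quotient ring
  let R := Zsqrtd (a ^ 2 - 1) ⧸ Ideal.span {(Q : Zsqrtd (a ^ 2 - 1))}
  let π : Zsqrtd (a ^ 2 - 1) →+* R :=
    Ideal.Quotient.mk (Ideal.span {(Q : Zsqrtd (a ^ 2 - 1))})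
  have hmk : ∀ z : Zsqrtd (a ^ 2 - 1), π z = 0 ↔ (Q : Zsqrtd (a ^ 2 - 1)) ∣ z := fun z =>
    Ideal.Quotient.eq_zero_iff_dvd _ z
  have hQ0 : ((Q : ℕ) : R) = 0 := by
    rw [show ((Q : ℕ) : R) = π ((Q : ℕ) : Zsqrtd (a ^ 2 - 1)) from (map_natCast π Q).symm, hmk]
  haveI hchar : CharP R Q := by
    constructor
    intro x
    constructor
    · intro hx
      have hx' : π ((x : ℤ) : Zsqrtd (a ^ 2 - 1)) = 0 := by
        rw [map_intCast, Int.cast_natCast]; exact hx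
      rw [hmk] at hx'
      have hQx : ((Q : ℤ) : Zsqrtd (a ^ 2 - 1)) ∣ ((x : ℤ) : Zsqrtd (a ^ 2 - 1)) := by
        exact_mod_cast hx'
      rw [Zsqrtd.intCast_dvd_intCast] at hQx
      exact_mod_cast hQx
    · rintro ⟨y, rfl⟩
      push_cast
      erw [Nat.cast_mul, hQ0, zero_mul]
  let f : ZMod Q →+* R := ZMod.castHom dvd_rfl R
  -- element s = sqrt(a^2-1)
  set s : R := π Zsqrtd.sqrtd with hsdef
  have hs2 : s * s = ((a ^ 2 - 1 : ℤ) : R) := by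
    rw [hsdef, ← map_mul, Zsqrtd.dmuld, map_intCast]
  -- Euler's criterion transported to R
  have hDk : ((a ^ 2 - 1 : ℤ) : R) ^ k = ((ε : ℤ) : R) := by
    have h := legendreSym.eq_pow Q (a ^ 2 - 1)
    rw [hQ2] at h
    rw [← map_intCast f (a ^ 2 - 1), ← map_intCast f ε, ← map_pow, hε, ← h]
  have hck : ((2 * (a + 1) : ℤ) : R) ^ k = ((δ : ℤ) : R) := by
    have h := legendreSym.eq_pow Q (2 * (a + 1))
    rw [hQ2] at h
    rw [← map_intCast f (2 * (a + 1)), ← map_intCast f δ, ← map_pow, hδ, ← h]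
  have hcu : IsUnit ((2 * (a + 1) : ℤ) : R) := by
    have hu : IsUnit (((2 * (a + 1) : ℤ) : ZMod Q)) := isUnit_iff_ne_zero.mpr hcne
    have hu' := hu.map f
    rwa [map_intCast] at hu'
  set m : ℕ := ((Q : ℤ) - ε).toNat / 2 with hm
  have hmcase : (ε = 1 ∧ m = k) ∨ (ε = -1 ∧ m = k + 1) := by
    rcases hεpm with h | h
    · exact Or.inl ⟨h, by rw [hm, h]; omega⟩
    · exact Or.inr ⟨h, by rw [hm, h]; omega⟩
  have hfinal := chua_aux Q k hk a ε δ hδsq R s hs2 hDk hck hcu m hmcase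
  rw [← hmk]
  have hωeq : π (⟨a, 1⟩ : Zsqrtd (a ^ 2 - 1)) = ((a : ℤ) : R) + s := by
    rw [Zsqrtd.decompose, map_add, map_mul, map_intCast, map_intCast,
      Int.cast_one, mul_one, hsdef]
  rw [map_sub, map_pow, map_intCast, hωeq, hfinal, sub_self]
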